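/- Let t ≥ 2, let (X, A, W) be a complete convex A-metric space, let f : X → X be an A-Zamfirescu mapping with unique fixed point u, and let α_i^n ∈ [0,1] (i = 1,...,t, n ∈ ℕ) with α_1^n + ... + α_t^n = 1 and α_t^n ≥ α > 0 for all n. Let {y_n} be any sequence in X and set ε_n = A(y_{n+1}, ..., y_{n+1}, W(y_n, y_n, ..., y_n, f y_n; α_1^n, ..., α_t^n)). If ε_n → 0 as n → ∞, then y_n converges to u, i.e., A(y_n, ..., y_n, u) → 0. -/

import Mathlib

open Filter

/-- The tuple `(x, x, ..., x, y)` with `x` in the first `t-1` slots and `y` in the last. -/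
def avec {X : Type*} (t : ℕ) (x y : X) : Fin t → X :=
  fun j => if (j : ℕ) < t - 1 then x else y

/-- `A` is an A-metric on `X` (with `t` arguments). -/
def IsAMetric {X : Type*} (t : ℕ) (A : (Fin t → X) → ℝ) : Prop :=
  (∀ x : Fin t → X, 0 ≤ A x) ∧
  (∀ x : Fin t → X, A x = 0 ↔ ∀ i j, x i = x j) ∧
  (∀ (x : Fin t → X) (y : X), A x ≤ ∑ i, A (avec t (x i) y))

/-- `f` is an A-Zamfirescu mapping with respect to the A-metric `A`. -/
def IsAZ {X : Type*} (t : ℕ) (A : (Fin t → X) → ℝ) (f : X → X) : Prop :=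
  ∃ a b c : ℝ, 0 ≤ a ∧ a < 1 ∧ 0 ≤ b ∧ b < 1 / (t : ℝ) ∧ 0 ≤ c ∧ c < 1 / (t : ℝ) ∧
    ∀ x y : X,
      A (avec t (f x) (f y)) ≤ a * A (avec t x y) ∨
      A (avec t (f x) (f y)) ≤ b * (A (avec t (f x) x) + A (avec t (f y) y)) ∨
      A (avec t (f x) (f y)) ≤ c * (A (avec t (f x) y) + A (avec t (f y) x))

/-- `W` is a convex structure on the A-metric space `(X, A)`. -/
def IsConvexStructure {X : Type*} (t : ℕ) (A : (Fin t → X) → ℝ)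
    (W : (Fin t → X) → (Fin t → ℝ) → X) : Prop :=
  ∀ (u : Fin t → X) (xs : Fin t → X) (a : Fin t → ℝ),
    (∀ i, a i ∈ Set.Icc (0 : ℝ) 1) → (∑ i, a i = 1) →
    A (fun j => if (j : ℕ) < t - 1 then u j else W xs a) ≤
      ∑ i, a i * A (fun j => if (j : ℕ) < t - 1 then u j else xs i)

/-- The A-metric space `(X, A)` is complete: every Cauchy sequence converges. -/
def IsCompleteA {X : Type*} (t : ℕ) (A : (Fin t → X) → ℝ) : Prop :=
  ∀ x : ℕ → X,
    (∀ ε : ℝ, 0 < ε → ∃ N, ∀ n ≥ N, ∀ m ≥ N, A (avec t (x n) (x m)) < ε) →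
    ∃ u : X, Tendsto (fun n => A (avec t (x n) u)) atTop (nhds 0)

/-! ### Auxiliary lemmas -/

section aux
variable {X : Type*} {t : ℕ} {A : (Fin t → X) → ℝ}

lemma A_self (hA : IsAMetric t A) (x : X) : A (avec t x x) = 0 := by
  rw [(hA.2.1 _)]
  intro i j
  show (if _ then x else x) = (if _ then x else x)
  split_ifs <;> rfl

lemma hlt_aux (ht : 2 ≤ t) : t - 1 < t := by omega

lemma sum_split (ht : 2 ≤ t) (g : Fin t → ℝ) :
    ∑ i, g i = g ⟨t-1, hlt_aux ht⟩ + ∑ i ∈ Finset.univ.erase ⟨t-1, hlt_aux ht⟩, g i :=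
  (Finset.add_sum_erase _ g (Finset.mem_univ _)).symm

lemma mem_erase_lt (ht : 2 ≤ t) {i : Fin t}
    (hi : i ∈ Finset.univ.erase (⟨t-1, hlt_aux ht⟩ : Fin t)) : (i : ℕ) < t - 1 := by
  have h1 := Finset.ne_of_mem_erase hi
  have h2 := i.isLt
  have : (i : ℕ) ≠ t - 1 := fun h => h1 (Fin.ext h)
  omega

lemma card_erase (ht : 2 ≤ t) :
    (Finset.univ.erase (⟨t-1, hlt_aux ht⟩ : Fin t)).card = t - 1 := by
  rw [Finset.card_erase_of_mem (Finset.mem_univ _)]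
  simp

lemma A_tri (ht : 2 ≤ t) (hA : IsAMetric t A) (x y z : X) :
    A (avec t x y) ≤ ((t:ℝ) - 1) * A (avec t x z) + A (avec t y z) := by
  have h3 := hA.2.2 (avec t x y) z
  rw [sum_split ht (g := fun i => A (avec t (avec t x y i) z))] at h3
  have hlast : avec t x y (⟨t-1, hlt_aux ht⟩ : Fin t) = y := if_neg (lt_irrefl _)
  have hsum : ∑ i ∈ Finset.univ.erase (⟨t-1, hlt_aux ht⟩ : Fin t),
      A (avec t (avec t x y i) z) = ((t:ℝ) - 1) * A (avec t x z) := by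
    rw [Finset.sum_congr rfl (fun i hi => by
      rw [show avec t x y i = x from if_pos (mem_erase_lt ht hi)]),
      Finset.sum_const, card_erase ht, nsmul_eq_mul]
    congr 1
    have h1 : (1:ℕ) ≤ t := by omega
    push_cast [Nat.cast_sub h1]
    ring
  rw [hlast, hsum] at h3
  linarith

lemma A_sym (ht : 2 ≤ t) (hA : IsAMetric t A) (x y : X) :
    A (avec t x y) = A (avec t y x) := by
  have h1 : ∀ p q : X, A (avec t p q) ≤ A (avec t q p) := by
    intro p q
    have h := A_tri ht hA p q p
    rw [A_self hA] at h
    linarith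
  exact le_antisymm (h1 x y) (h1 y x)

/-- Contraction at the fixed point of an A-Zamfirescu mapping. -/
lemma contraction (ht : 2 ≤ t) (hA : IsAMetric t A) {f : X → X} (hf : IsAZ t A f)
    {u : X} (hu : f u = u) :
    ∃ δ : ℝ, 0 ≤ δ ∧ δ < 1 ∧ ∀ z : X, A (avec t u (f z)) ≤ δ * A (avec t u z) := by
  obtain ⟨a, b, c, ha0, ha1, hb0, hb1, hc0, hc1, hZ⟩ := hf
  have htR : (2:ℝ) ≤ (t:ℝ) := by exact_mod_cast ht
  have htpos : (0:ℝ) < t := by linarith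
  have hbt : b * t < 1 := by
    have := (lt_div_iff₀ htpos).mp hb1
    linarith
  have hct : c * t < 1 := by
    have := (lt_div_iff₀ htpos).mp hc1
    linarith
  have hden2 : 0 < 1 - b * ((t:ℝ) - 1) := by nlinarith
  have hden3 : 0 < 1 - c := by nlinarith
  set β₂ := b / (1 - b * ((t:ℝ) - 1)) with hβ₂
  set β₃ := c / (1 - c) with hβ₃
  have hβ₂0 : 0 ≤ β₂ := div_nonneg hb0 (le_of_lt hden2)
  have hβ₃0 : 0 ≤ β₃ := div_nonneg hc0 (le_of_lt hden3)
  have hβ₂1 : β₂ < 1 := by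
    rw [hβ₂, div_lt_one hden2]; nlinarith
  have hβ₃1 : β₃ < 1 := by
    rw [hβ₃, div_lt_one hden3]; nlinarith
  refine ⟨max a (max β₂ β₃), le_trans ha0 (le_max_left _ _), ?_, ?_⟩
  · exact max_lt ha1 (max_lt hβ₂1 hβ₃1)
  intro z
  set δ := max a (max β₂ β₃) with hδ
  set D := A (avec t u (f z)) with hD
  set d := A (avec t u z) with hd
  have hDnn : 0 ≤ D := hA.1 _
  have hdnn : 0 ≤ d := hA.1 _
  rcases hZ u z with h | h | h
  · rw [hu] at h
    calc D ≤ a * d := h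
      _ ≤ δ * d := mul_le_mul_of_nonneg_right (le_max_left _ _) hdnn
  · rw [hu, A_self hA] at h
    have hfz : A (avec t (f z) z) ≤ ((t:ℝ) - 1) * D + d := by
      have := A_tri ht hA (f z) z u
      rw [A_sym ht hA (f z) u, A_sym ht hA z u, ← hD, ← hd] at this
      exact this
    have hDle : D ≤ b * (((t:ℝ)-1) * D + d) := by
      calc D ≤ b * (0 + A (avec t (f z) z)) := h
        _ ≤ b * (((t:ℝ)-1) * D + d) := by
            rw [zero_add]
            exact mul_le_mul_of_nonneg_left hfz hb0
    have h2 : D ≤ β₂ * d := by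
      rw [hβ₂, div_mul_eq_mul_div, le_div_iff₀ hden2]
      nlinarith
    calc D ≤ β₂ * d := h2
      _ ≤ δ * d := mul_le_mul_of_nonneg_right
          (le_trans (le_max_left _ _) (le_max_right _ _)) hdnn
  · rw [hu] at h
    have h' : D ≤ c * (d + D) := by
      rw [A_sym ht hA (f z) u, ← hD, ← hd] at h
      exact h
    have h2 : D ≤ β₃ * d := by
      rw [hβ₃, div_mul_eq_mul_div, le_div_iff₀ hden3]
      nlinarith
    calc D ≤ β₃ * d := h2
      _ ≤ δ * d := mul_le_mul_of_nonneg_right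
          (le_trans (le_max_right _ _) (le_max_right _ _)) hdnn

end aux

/-- If `d (n+1) ≤ q * d n + c n` with `0 ≤ q < 1`, `d ≥ 0` and `c → 0`, then `d → 0`. -/
lemma tendsto_zero_of_rec (q : ℝ) (hq0 : 0 ≤ q) (hq1 : q < 1)
    (d c : ℕ → ℝ) (hd : ∀ n, 0 ≤ d n) (hrec : ∀ n, d (n+1) ≤ q * d n + c n)
    (hc : Tendsto c atTop (nhds 0)) : Tendsto d atTop (nhds 0) := by
  rw [Metric.tendsto_atTop]
  intro e he
  have he' : 0 < e * (1 - q) / 2 := by nlinarith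
  obtain ⟨N₁, hN₁⟩ := (Metric.tendsto_atTop.mp hc) _ he'
  have key : ∀ k, d (N₁ + k) ≤ q ^ k * d N₁ + e / 2 := by
    intro k
    induction k with
    | zero => simp; linarith [he]
    | succ k ih =>
      have hck : c (N₁ + k) < e * (1 - q) / 2 := by
        have := hN₁ (N₁ + k) (Nat.le_add_right _ _)
        rw [Real.dist_eq, sub_zero] at this
        exact lt_of_le_of_lt (le_abs_self _) this
      have h2 : d (N₁ + (k+1)) = d ((N₁ + k) + 1) := by ring_nf
      rw [h2]
      calc d ((N₁+k)+1) ≤ q * d (N₁+k) + c (N₁+k) := hrec _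
        _ ≤ q * (q ^ k * d N₁ + e/2) + e * (1-q)/2 := by
            have := mul_le_mul_of_nonneg_left ih hq0
            linarith
        _ = q ^ (k+1) * d N₁ + (q * (e/2) + e * (1-q)/2) := by ring
        _ ≤ q ^ (k+1) * d N₁ + e/2 := by nlinarith
  have hpow : Tendsto (fun k => q ^ k * d N₁) atTop (nhds 0) := by
    have := tendsto_pow_atTop_nhds_zero_of_lt_one hq0 hq1
    simpa using this.mul_const (d N₁)
  obtain ⟨N₂, hN₂⟩ := (Metric.tendsto_atTop.mp hpow) _ (by positivity : (0:ℝ) < e/2)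
  refine ⟨N₁ + N₂, fun n hn => ?_⟩
  have hk : N₂ ≤ n - N₁ := by omega
  have hn1 : N₁ + (n - N₁) = n := by omega
  have h1 : d n ≤ q ^ (n - N₁) * d N₁ + e/2 := by
    have := key (n - N₁)
    rwa [hn1] at this
  have h2 := hN₂ (n - N₁) hk
  rw [Real.dist_eq, sub_zero] at h2
  have h3 : q ^ (n - N₁) * d N₁ < e/2 := lt_of_le_of_lt (le_abs_self _) h2
  rw [Real.dist_eq, sub_zero, abs_of_nonneg (hd n)]
  linarith

/-- Stability of the Mann iteration process (forward direction): if the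
approximate-iteration errors tend to zero, the sequence converges to the
unique fixed point. -/
theorem mann_stability_forward
    {X : Type*} (t : ℕ) (ht : 2 ≤ t)
    (A : (Fin t → X) → ℝ) (hA : IsAMetric t A)
    (W : (Fin t → X) → (Fin t → ℝ) → X) (hW : IsConvexStructure t A W)
    (hcomp : IsCompleteA t A)
    (f : X → X) (hf : IsAZ t A f)
    (u : X) (hu : f u = u) (huniq : ∀ v : X, f v = v → v = u)
    (α : ℕ → Fin t → ℝ)
    (hα : ∀ n i, α n i ∈ Set.Icc (0 : ℝ) 1)
    (hαsum : ∀ n, ∑ i, α n i = 1)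
    (a : ℝ) (ha : 0 < a) (hlb : ∀ n, a ≤ α n ⟨t - 1, by omega⟩)
    (y : ℕ → X) (ε : ℕ → ℝ)
    (hε : ∀ n, ε n = A (avec t (y (n + 1)) (W (avec t (y n) (f (y n))) (α n))))
    (hε0 : Tendsto ε atTop (nhds 0)) :
    Tendsto (fun n => A (avec t (y n) u)) atTop (nhds 0) := by
  obtain ⟨δ, hδ0, hδ1, hδ⟩ := contraction ht hA hf hu
  set L : Fin t := ⟨t - 1, by omega⟩ with hL
  have ha1 : a ≤ 1 := le_trans (hlb 0) (hα 0 L).2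
  set q : ℝ := 1 - a * (1 - δ) with hq
  have hq0 : 0 ≤ q := by nlinarith
  have hq1 : q < 1 := by nlinarith
  set d : ℕ → ℝ := fun n => A (avec t (y n) u) with hd
  have hdnn : ∀ n, 0 ≤ d n := fun n => hA.1 _
  have htR : (2:ℝ) ≤ (t:ℝ) := by exact_mod_cast ht
  have hrec : ∀ n, d (n+1) ≤ q * d n + ((t:ℝ) - 1) * ε n := by
    intro n
    set Wn := W (avec t (y n) (f (y n))) (α n) with hWn
    have tri : d (n+1) ≤ ((t:ℝ)-1) * A (avec t (y (n+1)) Wn) + A (avec t u Wn) :=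
      A_tri ht hA (y (n+1)) u Wn
    have hεn : A (avec t (y (n+1)) Wn) = ε n := (hε n).symm
    -- convexity bound
    have hcv := hW (fun _ => u) (avec t (y n) (f (y n))) (α n) (hα n) (hαsum n)
    have hcv' : A (avec t u Wn) ≤
        ∑ i, α n i * A (avec t u (avec t (y n) (f (y n)) i)) := hcv
    have hsplit := sum_split ht
      (g := fun i => α n i * A (avec t u (avec t (y n) (f (y n)) i)))
    have hxsL : avec t (y n) (f (y n)) L = f (y n) := if_neg (lt_irrefl _)
    have hsum2 : ∑ i ∈ Finset.univ.erase L,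
        α n i * A (avec t u (avec t (y n) (f (y n)) i))
        = (1 - α n L) * A (avec t u (y n)) := by
      rw [Finset.sum_congr rfl (fun i hi => by
        rw [show avec t (y n) (f (y n)) i = y n from if_pos (mem_erase_lt ht hi)]),
        ← Finset.sum_mul]
      congr 1
      have := sum_split ht (g := α n)
      rw [hαsum n] at this
      linarith [this]
    have hcon : A (avec t u Wn) ≤ (1 - α n L * (1 - δ)) * A (avec t u (y n)) := by
      have hδy := hδ (y n)
      have hαL0 : 0 ≤ α n L := (hα n L).1
      have hαL1 : α n L ≤ 1 := (hα n L).2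
      have hAnn : 0 ≤ A (avec t u (y n)) := hA.1 _
      calc A (avec t u Wn)
          ≤ ∑ i, α n i * A (avec t u (avec t (y n) (f (y n)) i)) := hcv'
        _ = α n L * A (avec t u (f (y n))) + (1 - α n L) * A (avec t u (y n)) := by
            rw [hsplit, hsum2, hxsL]
        _ ≤ α n L * (δ * A (avec t u (y n))) + (1 - α n L) * A (avec t u (y n)) := by
            have := mul_le_mul_of_nonneg_left hδy hαL0
            linarith
        _ = (1 - α n L * (1 - δ)) * A (avec t u (y n)) := by ring
    have hsymn : A (avec t u (y n)) = d n := A_sym ht hA u (y n)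
    have hfin : A (avec t u Wn) ≤ q * d n := by
      rw [hsymn] at hcon
      have hlbn := hlb n
      have hαL1 : α n L ≤ 1 := (hα n L).2
      have hdn := hdnn n
      have key : 0 ≤ (α n L - a) * (1 - δ) * d n :=
        mul_nonneg (mul_nonneg (by linarith) (by linarith)) hdn
      nlinarith [hcon, key]
    calc d (n+1) ≤ ((t:ℝ)-1) * A (avec t (y (n+1)) Wn) + A (avec t u Wn) := tri
      _ ≤ ((t:ℝ)-1) * ε n + q * d n := by
          rw [hεn]
          linarith [hfin]
      _ = q * d n + ((t:ℝ)-1) * ε n := by ring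
  exact tendsto_zero_of_rec q hq0 hq1 d (fun n => ((t:ℝ)-1) * ε n) hdnn hrec
    (by simpa using hε0.const_mul ((t:ℝ)-1))
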